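/- Let C: f = 0 be a free divisor of degree d which is not a pencil of lines, with exponents d_1 ≤ d_2. Then d_1 and d_2 are the two roots of the quadratic equation t² − (d−1)t + (d−1)² − τ(C) = 0; in particular d = d_1 + d_2 + 1 and τ(C) = (d−1)² − d_1·d_2, so the pairs (d, τ(C)) and (d_1, d_2) determine each other. -/

import Mathlib

open MvPolynomial

noncomputable section

/-- The polynomial ring `S = ℂ[x,y,z]`. -/
abbrev S3 : Type := MvPolynomial (Fin 3) ℂ

/-- The Jacobian ideal of `f`, generated by the three partial derivatives. -/
def jacobianIdeal (f : S3) : Ideal S3 :=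
  Ideal.span {pderiv 0 f, pderiv 1 f, pderiv 2 f}

/-- The dimension `m(f)_k` of the degree `k` homogeneous component of the
Milnor algebra `M(f) = S/J_f`. -/
def milnorDim (f : S3) (k : ℕ) : ℕ :=
  Module.finrank ℂ (Submodule.map (Ideal.Quotient.mkₐ ℂ (jacobianIdeal f)).toLinearMap
    (homogeneousSubmodule (Fin 3) ℂ k))

/-- The `S`-linear map `(a,b,c) ↦ a f_x + b f_y + c f_z`. -/
def relMap (f : S3) : (Fin 3 → S3) →ₗ[S3] S3 where
  toFun ρ := ∑ i, ρ i * pderiv i f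
  map_add' a b := by simp [add_mul, Finset.sum_add_distrib]
  map_smul' c a := by simp [Finset.mul_sum, mul_assoc]

/-- The module `AR(f)` of all relations among the partial derivatives of `f`. -/
def AR (f : S3) : Submodule S3 (Fin 3 → S3) := LinearMap.ker (relMap f)

/-- The degree `m` graded piece `AR(f)_m`, as a `ℂ`-subspace of `S³`. -/
def ARgr (f : S3) (m : ℕ) : Submodule ℂ (Fin 3 → S3) :=
  (LinearMap.ker ((relMap f).restrictScalars ℂ)) ⊓
    Submodule.pi Set.univ (fun _ => homogeneousSubmodule (Fin 3) ℂ m)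

/-- `ar(f)_m = dim_ℂ AR(f)_m`. -/
def arDim (f : S3) (m : ℕ) : ℕ := Module.finrank ℂ (ARgr f m)

/-- A vector of polynomials is homogeneous of degree `m` if all components are. -/
def IsHomogVec (ρ : Fin 3 → S3) (m : ℕ) : Prop := ∀ i, (ρ i).IsHomogeneous m

/-- `C : f = 0` is a free divisor with exponents `d₁, d₂` if `AR(f)` is a free
`S`-module with a homogeneous basis in degrees `d₁` and `d₂`. -/
def IsFreeDivisorWith (f : S3) (d₁ d₂ : ℕ) : Prop :=
  ∃ b : Module.Basis (Fin 2) S3 (AR f),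
    IsHomogVec (↑(b 0)) d₁ ∧ IsHomogVec (↑(b 1)) d₂

/-- `C : f = 0` is a free divisor if `AR(f)` is a free graded `S`-module of rank two. -/
def IsFreeDivisor (f : S3) : Prop := ∃ d₁ d₂ : ℕ, IsFreeDivisorWith f d₁ d₂

/-- `binom(a, 2)` for an integer `a`, zero when `a < 2`. -/
def chooseTwo (a : ℤ) : ℤ := (a.toNat).choose 2

/-- The Hilbert function `m(f_s)_k` of the Milnor algebra of a smooth plane curve
of degree `d`. -/
def smoothMilnorDim (d : ℕ) (k : ℤ) : ℤ :=
  chooseTwo (k + 2) - 3 * chooseTwo (k - d + 3) + 3 * chooseTwo (k - 2 * d + 4)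
    - chooseTwo (k - 3 * d + 5)

/-- `m(f)_k` extended to integer indices by zero. -/
def milnorDimZ (f : S3) (k : ℤ) : ℤ := if k < 0 then 0 else milnorDim f k.toNat

/-- `ar(f)_m` extended to integer indices by zero. -/
def arDimZ (f : S3) (m : ℤ) : ℤ := if m < 0 then 0 else arDim f m.toNat

/-- The coincidence threshold `ct(f)`. -/
def ctf (f : S3) (d : ℕ) : ℕ :=
  sSup {q : ℕ | ∀ k ≤ q, (milnorDim f k : ℤ) = smoothMilnorDim d k}

/-- The stability threshold `st(f)`. -/
def stf (f : S3) (τ : ℕ) : ℕ := sInf {q : ℕ | ∀ k ≥ q, milnorDim f k = τ}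

/-- `mdr(f)`, the minimal degree of a syzygy. -/
def mdr (f : S3) : ℕ := sInf {q : ℕ | ARgr f q ≠ ⊥}

/-- The irrelevant maximal ideal `(x,y,z)`. -/
def maxIdeal3 : Ideal S3 := Ideal.span {X 0, X 1, X 2}

/-- The saturation `I_f` of the Jacobian ideal with respect to `(x,y,z)`. -/
def satJacobian (f : S3) : Ideal S3 := ⨆ n : ℕ, (jacobianIdeal f).colon ((maxIdeal3 ^ n : Ideal S3) : Set S3)


/-! ### Auxiliary lemmas -/

section Aux

set_option synthInstance.maxHeartbeats 1000000
set_option maxHeartbeats 1000000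

theorem relMap_apply' (f : S3) (ρ : Fin 3 → S3) : relMap f ρ = ∑ i, ρ i * pderiv i f := rfl

theorem pderiv_isHomogeneous' (f : S3) (n : ℕ) (i : Fin 3)
    (hf : f.IsHomogeneous n) : (pderiv i f).IsHomogeneous (n - 1) := by
  have hsum : f = ∑ d ∈ f.support, monomial d (coeff d f) := f.as_sum
  rw [hsum, map_sum]
  apply IsHomogeneous.sum
  intro d hd
  rw [pderiv_monomial]
  rcases eq_or_ne (d i) 0 with h0 | h0
  · rw [h0]; simp only [Nat.cast_zero, mul_zero, monomial_zero]
    exact isHomogeneous_zero _ _ _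
  · apply isHomogeneous_monomial
    have hle : Finsupp.single i 1 ≤ d := by rw [Finsupp.single_le_iff]; omega
    have hdd : (d - Finsupp.single i 1) + Finsupp.single i 1 = d := tsub_add_cancel_of_le hle
    have hdeg : d.degree = n := by
      by_contra hne
      exact (MvPolynomial.mem_support_iff.mp hd) (hf.coeff_eq_zero hne)
    have h1 : ((d - Finsupp.single i 1) + Finsupp.single i 1).degree
        = (d - Finsupp.single i 1).degree + (Finsupp.single i 1).degree := by
      simp [Finsupp.degree_eq_weight_one, map_add]
    rw [hdd] at h1
    have h2 : (Finsupp.single i 1).degree = 1 := by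
      simp [Finsupp.degree_apply, Finsupp.support_single_ne_zero i (one_ne_zero)]
    omega

theorem homComp_mul_homog (p h : S3) (a n : ℕ) (hh : h.IsHomogeneous a) :
    homogeneousComponent (n + a) (p * h) = homogeneousComponent n p * h := by
  induction p using MvPolynomial.induction_on' with
  | monomial d r =>
    have hmon : (monomial d r : S3).IsHomogeneous d.degree := isHomogeneous_monomial r rfl
    rw [homogeneousComponent_of_mem (hmon.mul hh), homogeneousComponent_of_mem hmon]
    by_cases hc : n = d.degree
    · subst hc; simp
    · rw [if_neg (by omega), if_neg hc, zero_mul]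
  | add p q hp hq => rw [add_mul, map_add, map_add, hp, hq, add_mul]

def degSetEquiv (n : ℕ) : Sym (Fin 3) n ≃ {d : Fin 3 →₀ ℕ // d ∈ {d : Fin 3 →₀ ℕ | d.degree = n}} where
  toFun m := ⟨Multiset.toFinsupp m.1, by
    have := Multiset.toFinsupp_sum_eq m.1
    simpa [Finsupp.degree_apply, Finsupp.sum, m.2] using this⟩
  invFun d := ⟨Finsupp.toMultiset d.1, by
    have h := Finsupp.card_toMultiset d.1
    have h2 : (d : Fin 3 →₀ ℕ).degree = n := d.2
    rw [h]
    simpa [Finsupp.degree_apply, Finsupp.sum] using h2⟩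
  left_inv m := by ext1; simp
  right_inv d := by ext1; simp

instance degSetFintype (n : ℕ) : Fintype {d : Fin 3 →₀ ℕ // d ∈ {d : Fin 3 →₀ ℕ | d.degree = n}} :=
  Fintype.ofEquiv _ (degSetEquiv n)

def homogBasis (n : ℕ) :
    Module.Basis {d : Fin 3 →₀ ℕ | d.degree = n} ℂ (homogeneousSubmodule (Fin 3) ℂ n) :=
  (basisRestrictSupport ℂ _).map
    (LinearEquiv.ofEq _ _ (homogeneousSubmodule_eq_finsupp_supported (Fin 3) ℂ n).symm)

instance homogFinite (n : ℕ) : Module.Finite ℂ (homogeneousSubmodule (Fin 3) ℂ n) :=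
  Module.Finite.of_basis (homogBasis n)

instance homogFree (n : ℕ) : Module.Free ℂ (homogeneousSubmodule (Fin 3) ℂ n) :=
  Module.Free.of_basis (homogBasis n)

theorem finrank_homog (n : ℕ) :
    Module.finrank ℂ (homogeneousSubmodule (Fin 3) ℂ n) = (n + 2).choose 2 := by
  rw [Module.finrank_eq_card_basis (homogBasis n)]
  rw [← Fintype.card_congr (degSetEquiv n), Sym.card_sym_eq_choose]
  simp only [Fintype.card_fin]
  show (3 + n - 1).choose n = (n + 2).choose 2
  have h1 : 3 + n - 1 = n + 2 := by omega
  rw [h1]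
  exact Nat.choose_symm_of_eq_add (by omega)

theorem twoH (n : ℕ) :
    2 * Module.finrank ℂ (homogeneousSubmodule (Fin 3) ℂ n) = (n + 1) * (n + 2) := by
  rw [finrank_homog, Nat.choose_two_right]
  have h1 : n + 2 - 1 = n + 1 := by omega
  rw [h1]
  have h2 : 2 ∣ (n + 2) * (n + 1) := by
    rcases Nat.even_or_odd n with ⟨r, hr⟩ | ⟨r, hr⟩
    · exact Dvd.dvd.mul_right ⟨r + 1, by omega⟩ _
    · exact Dvd.dvd.mul_left ⟨r + 1, by omega⟩ _
  rw [Nat.mul_div_cancel' h2]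
  ring

theorem arDim_eq (f : S3) (d₁ d₂ m : ℕ) (b : Module.Basis (Fin 2) S3 (AR f))
    (hb0 : IsHomogVec (↑(b 0)) d₁) (hb1 : IsHomogVec (↑(b 1)) d₂)
    (h1 : d₁ ≤ m) (h2 : d₂ ≤ m) :
    arDim f m = Module.finrank ℂ (homogeneousSubmodule (Fin 3) ℂ (m - d₁))
      + Module.finrank ℂ (homogeneousSubmodule (Fin 3) ℂ (m - d₂)) := by
  classical
  set B0 : Fin 3 → S3 := ↑(b 0) with hB0
  set B1 : Fin 3 → S3 := ↑(b 1) with hB1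
  have hker0 : relMap f B0 = 0 := (b 0).2
  have hker1 : relMap f B1 = 0 := (b 1).2
  set Θ : (homogeneousSubmodule (Fin 3) ℂ (m - d₁) × homogeneousSubmodule (Fin 3) ℂ (m - d₂))
      →ₗ[ℂ] (Fin 3 → S3) :=
    { toFun := fun pq => (pq.1 : S3) • B0 + (pq.2 : S3) • B1
      map_add' := by
        intro x y
        simp only [Submodule.coe_add, Prod.fst_add, Prod.snd_add, add_smul]
        abel
      map_smul' := by
        intro c x
        simp only [Prod.smul_fst, Prod.smul_snd, Submodule.coe_smul, RingHom.id_apply, smul_add,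
          smul_assoc] } with hΘ
  have hrange : LinearMap.range Θ = ARgr f m := by
    apply le_antisymm
    · rintro _ ⟨⟨p, q⟩, rfl⟩
      rw [ARgr, Submodule.mem_inf]
      constructor
      · rw [LinearMap.mem_ker]
        show relMap f ((p : S3) • B0 + (q : S3) • B1) = 0
        rw [map_add, map_smul, map_smul, hker0, hker1, smul_zero, smul_zero, add_zero]
      · rw [Submodule.mem_pi]
        intro i _
        rw [mem_homogeneousSubmodule]
        show (((p : S3) • B0 + (q : S3) • B1) i).IsHomogeneous m
        have hp : ((p : S3) * B0 i).IsHomogeneous m := by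
          have := (mem_homogeneousSubmodule _ _).1 p.2 |>.mul (hb0 i)
          rwa [Nat.sub_add_cancel h1] at this
        have hq : ((q : S3) * B1 i).IsHomogeneous m := by
          have := (mem_homogeneousSubmodule _ _).1 q.2 |>.mul (hb1 i)
          rwa [Nat.sub_add_cancel h2] at this
        exact hp.add hq
    · intro ρ hρ
      rw [ARgr, Submodule.mem_inf] at hρ
      obtain ⟨hk, hpi⟩ := hρ
      have hρAR : ρ ∈ AR f := hk
      set x : AR f := ⟨ρ, hρAR⟩ with hx
      set p : S3 := b.repr x 0 with hp
      set q : S3 := b.repr x 1 with hq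
      have hrepr : p • B0 + q • B1 = ρ := by
        have h : (↑(∑ i : Fin 2, b.repr x i • b i) : Fin 3 → S3) = ρ := by
          rw [b.sum_repr x]
        rw [Fin.sum_univ_two] at h
        simp only [Submodule.coe_add, SetLike.val_smul] at h
        exact h
      have hcomp : ∀ i, ρ i = homogeneousComponent (m - d₁) p * B0 i
          + homogeneousComponent (m - d₂) q * B1 i := by
        intro i
        have hmem : ρ i ∈ homogeneousSubmodule (Fin 3) ℂ m := by
          rw [Submodule.mem_pi] at hpi; exact hpi i trivial
        have e1 : ρ i = homogeneousComponent m (ρ i) := by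
          rw [homogeneousComponent_of_mem hmem, if_pos rfl]
        have e2 : ρ i = p * B0 i + q * B1 i := by
          rw [← hrepr]; simp [Pi.add_apply, smul_eq_mul]
        have e3 : homogeneousComponent m (p * B0 i)
            = homogeneousComponent (m - d₁) p * B0 i := by
          have := homComp_mul_homog p (B0 i) d₁ (m - d₁) (hb0 i)
          rwa [Nat.sub_add_cancel h1] at this
        have e4 : homogeneousComponent m (q * B1 i)
            = homogeneousComponent (m - d₂) q * B1 i := by
          have := homComp_mul_homog q (B1 i) d₂ (m - d₂) (hb1 i)
          rwa [Nat.sub_add_cancel h2] at this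
        calc ρ i = homogeneousComponent m (ρ i) := e1
          _ = homogeneousComponent m (p * B0 i) + homogeneousComponent m (q * B1 i) := by
              rw [e2, map_add]
          _ = _ := by rw [e3, e4]
      refine ⟨(⟨homogeneousComponent (m - d₁) p, ?_⟩, ⟨homogeneousComponent (m - d₂) q, ?_⟩), ?_⟩
      · exact homogeneousComponent_mem _ _
      · exact homogeneousComponent_mem _ _
      · funext i
        show homogeneousComponent (m - d₁) p • B0 i + homogeneousComponent (m - d₂) q • B1 i = ρ i
        rw [hcomp i]; simp [smul_eq_mul]
  have hinj : Function.Injective Θ := by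
    rw [← LinearMap.ker_eq_bot]
    rw [Submodule.eq_bot_iff]
    rintro ⟨p, q⟩ hker
    rw [LinearMap.mem_ker] at hker
    have h0 : (p : S3) • B0 + (q : S3) • B1 = 0 := hker
    have hAR : ((p : S3) • b 0 + (q : S3) • b 1 : AR f) = 0 := by
      apply Subtype.ext
      simp only [Submodule.coe_add, SetLike.val_smul, Submodule.coe_zero]
      exact h0
    have hli := b.linearIndependent
    have hcoef := Fintype.linearIndependent_iff.mp hli ![(p : S3), (q : S3)] (by
      rw [Fin.sum_univ_two]
      simp only [Matrix.cons_val_zero, Matrix.cons_val_one, Matrix.head_cons]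
      exact hAR)
    have hp0 : (p : S3) = 0 := hcoef 0
    have hq0 : (q : S3) = 0 := hcoef 1
    exact Prod.ext (Subtype.ext hp0) (Subtype.ext hq0)
  have := LinearMap.finrank_range_of_inj hinj
  rw [hrange] at this
  rw [arDim, this, Module.finrank_prod]

theorem pderiv_mem (f : S3) (i : Fin 3) : pderiv i f ∈ jacobianIdeal f := by
  apply Ideal.subset_span
  fin_cases i <;> simp

theorem jacobian_eq_range (f : S3) :
    jacobianIdeal f = LinearMap.range (relMap f) := by
  apply le_antisymm
  · rw [jacobianIdeal, Ideal.span_le]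
    intro x hx
    simp only [Set.mem_insert_iff, Set.mem_singleton_iff] at hx
    rcases hx with h | h | h <;> subst h
    · exact ⟨Pi.single 0 1, by rw [relMap_apply', Fin.sum_univ_three]; simp⟩
    · exact ⟨Pi.single 1 1, by rw [relMap_apply', Fin.sum_univ_three]; simp⟩
    · exact ⟨Pi.single 2 1, by rw [relMap_apply', Fin.sum_univ_three]; simp⟩
  · rintro _ ⟨ρ, rfl⟩
    rw [relMap_apply']
    exact Submodule.sum_mem _ fun i _ => Ideal.mul_mem_left _ _ (pderiv_mem f i)

theorem milnor_rank (f : S3) (k : ℕ) :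
    milnorDim f k + Module.finrank ℂ
      ↥(homogeneousSubmodule (Fin 3) ℂ k ⊓ (jacobianIdeal f).restrictScalars ℂ) =
      Module.finrank ℂ (homogeneousSubmodule (Fin 3) ℂ k) := by
  set J := jacobianIdeal f
  set Q : S3 →ₗ[ℂ] (S3 ⧸ J) := (Ideal.Quotient.mkₐ ℂ J).toLinearMap with hQ
  set L := Q.domRestrict (homogeneousSubmodule (Fin 3) ℂ k) with hL
  have h1 := LinearMap.finrank_range_add_finrank_ker L
  have hrange : LinearMap.range L
      = Submodule.map Q (homogeneousSubmodule (Fin 3) ℂ k) :=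
    LinearMap.range_domRestrict _ _
  have hkerQ : LinearMap.ker Q = J.restrictScalars ℂ := by
    ext x
    simp only [LinearMap.mem_ker, Submodule.restrictScalars_mem, hQ, AlgHom.toLinearMap_apply,
      Ideal.Quotient.mkₐ_eq_mk]
    exact Ideal.Quotient.eq_zero_iff_mem
  have hkermap : Submodule.map (homogeneousSubmodule (Fin 3) ℂ k).subtype (LinearMap.ker L)
      = homogeneousSubmodule (Fin 3) ℂ k ⊓ J.restrictScalars ℂ := by
    rw [hL, LinearMap.ker_domRestrict, Submodule.map_comap_subtype, hkerQ]
  have hker : Module.finrank ℂ (LinearMap.ker L)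
      = Module.finrank ℂ ↥(homogeneousSubmodule (Fin 3) ℂ k ⊓ J.restrictScalars ℂ) := by
    rw [← hkermap]
    exact (Submodule.equivMapOfInjective _ (Submodule.injective_subtype _)
      (LinearMap.ker L)).finrank_eq
  rw [hrange, hker] at h1
  exact h1

theorem jac_rank (f : S3) (d : ℕ) (hf : f.IsHomogeneous d) (m : ℕ) :
    3 * Module.finrank ℂ (homogeneousSubmodule (Fin 3) ℂ m)
      = Module.finrank ℂ ↥(homogeneousSubmodule (Fin 3) ℂ (m + (d - 1)) ⊓
          (jacobianIdeal f).restrictScalars ℂ) + arDim f m := by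
  classical
  have hpd : ∀ i, (pderiv i f).IsHomogeneous (d - 1) := fun i => pderiv_isHomogeneous' f d i hf
  set k := m + (d - 1) with hk
  set Sm := homogeneousSubmodule (Fin 3) ℂ m with hSm
  set Ψ : (Fin 3 → Sm) →ₗ[ℂ] S3 :=
    { toFun := fun a => ∑ i, (a i : S3) * pderiv i f
      map_add' := by intro a b; simp [add_mul, Finset.sum_add_distrib]
      map_smul' := by intro c a; simp [Finset.smul_sum, smul_mul_assoc] } with hΨ
  have hrange : LinearMap.range Ψ
      = homogeneousSubmodule (Fin 3) ℂ k ⊓ (jacobianIdeal f).restrictScalars ℂ := by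
    apply le_antisymm
    · rintro _ ⟨a, rfl⟩
      rw [Submodule.mem_inf]
      constructor
      · rw [mem_homogeneousSubmodule]
        show (∑ i, (a i : S3) * pderiv i f).IsHomogeneous k
        apply MvPolynomial.IsHomogeneous.sum
        intro i _
        exact ((mem_homogeneousSubmodule _ _).1 (a i).2).mul (hpd i)
      · show (∑ i, (a i : S3) * pderiv i f) ∈ jacobianIdeal f
        exact Submodule.sum_mem _ fun i _ => Ideal.mul_mem_left _ _ (pderiv_mem f i)
    · intro g hg
      rw [Submodule.mem_inf] at hg
      obtain ⟨hgk, hgJ⟩ := hg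
      rw [Submodule.restrictScalars_mem, jacobian_eq_range] at hgJ
      obtain ⟨c, hc⟩ := hgJ
      refine ⟨fun i => ⟨homogeneousComponent m (c i), homogeneousComponent_mem _ _⟩, ?_⟩
      show ∑ i, homogeneousComponent m (c i) * pderiv i f = g
      have e1 : g = homogeneousComponent k g := by
        rw [homogeneousComponent_of_mem hgk, if_pos rfl]
      calc ∑ i, homogeneousComponent m (c i) * pderiv i f
          = ∑ i, homogeneousComponent k (c i * pderiv i f) := by
            refine Finset.sum_congr rfl fun i _ => ?_
            rw [hk, homComp_mul_homog (c i) (pderiv i f) (d - 1) m (hpd i)]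
        _ = homogeneousComponent k (∑ i, c i * pderiv i f) := (map_sum _ _ _).symm
        _ = homogeneousComponent k g := by rw [← relMap_apply', hc]
        _ = g := e1.symm
  set ι : (Fin 3 → Sm) →ₗ[ℂ] (Fin 3 → S3) :=
    { toFun := fun a i => (a i : S3)
      map_add' := by intro a b; funext i; simp
      map_smul' := by intro c a; funext i; simp } with hι
  have hιinj : Function.Injective ι := by
    intro a b h
    funext i
    exact Subtype.ext (congrFun h i)
  have hkermap : Submodule.map ι (LinearMap.ker Ψ) = ARgr f m := by
    apply le_antisymm
    · rintro _ ⟨a, ha, rfl⟩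
      rw [SetLike.mem_coe, LinearMap.mem_ker] at ha
      rw [ARgr, Submodule.mem_inf]
      constructor
      · rw [LinearMap.mem_ker]
        show relMap f (fun i => (a i : S3)) = 0
        rw [relMap_apply']
        exact ha
      · rw [Submodule.mem_pi]
        intro i _
        exact (a i).2
    · intro ρ hρ
      rw [ARgr, Submodule.mem_inf] at hρ
      obtain ⟨hker, hpi⟩ := hρ
      rw [Submodule.mem_pi] at hpi
      refine ⟨fun i => ⟨ρ i, hpi i trivial⟩, ?_, rfl⟩
      rw [SetLike.mem_coe, LinearMap.mem_ker]
      show ∑ i, ρ i * pderiv i f = 0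
      rw [← relMap_apply']
      exact hker
  have hkerdim : Module.finrank ℂ (LinearMap.ker Ψ) = arDim f m := by
    rw [arDim, ← hkermap]
    exact (Submodule.equivMapOfInjective ι hιinj (LinearMap.ker Ψ)).finrank_eq
  have h1 := LinearMap.finrank_range_add_finrank_ker Ψ
  rw [hrange, hkerdim] at h1
  have hdom : Module.finrank ℂ (Fin 3 → Sm) = 3 * Module.finrank ℂ Sm := by
    rw [Module.finrank_pi_fintype]
    simp [Finset.sum_const]
  rw [hdom] at h1
  exact h1.symm

end Aux

theorem stmt4 (f : S3) (d : ℕ) (hf : f.IsHomogeneous d) (hred : Squarefree f)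
    (d₁ d₂ : ℕ) (hfree : IsFreeDivisorWith f d₁ d₂) (h12 : d₁ ≤ d₂) (hpencil : 1 ≤ d₁)
    (τ : ℕ) (hτ : ∃ N : ℕ, ∀ k ≥ N, milnorDim f k = τ) :
    ((d₁ : ℤ) ^ 2 - ((d : ℤ) - 1) * d₁ + ((d : ℤ) - 1) ^ 2 - τ = 0) ∧
    ((d₂ : ℤ) ^ 2 - ((d : ℤ) - 1) * d₂ + ((d : ℤ) - 1) ^ 2 - τ = 0) ∧
    d = d₁ + d₂ + 1 ∧ (τ : ℤ) = ((d : ℤ) - 1) ^ 2 - (d₁ : ℤ) * d₂ := by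
  obtain ⟨b, hb0, hb1⟩ := hfree
  obtain ⟨N, hN⟩ := hτ
  obtain ⟨c, hc⟩ : ∃ c, d₂ = d₁ + c := ⟨d₂ - d₁, by omega⟩
  have master : ∀ m : ℕ, d₂ ≤ m →
      milnorDim f (m + (d - 1)) + 3 * Module.finrank ℂ (homogeneousSubmodule (Fin 3) ℂ m)
      = Module.finrank ℂ (homogeneousSubmodule (Fin 3) ℂ (m + (d - 1)))
        + Module.finrank ℂ (homogeneousSubmodule (Fin 3) ℂ (m - d₁))
        + Module.finrank ℂ (homogeneousSubmodule (Fin 3) ℂ (m - d₂)) := by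
    intro m hm
    have h1 := milnor_rank f (m + (d - 1))
    have h2 := jac_rank f d hf m
    have h3 := arDim_eq f d₁ d₂ m b hb0 hb1 (le_trans h12 hm) hm
    rw [h3] at h2
    omega
  have E0 := master (N + d₁ + c) (by omega)
  have E1 := master (N + d₁ + c + 1) (by omega)
  rw [hN ((N + d₁ + c) + (d - 1)) (by omega)] at E0
  rw [hN ((N + d₁ + c + 1) + (d - 1)) (by omega)] at E1
  have i1 : N + d₁ + c - d₁ = N + c := by omega
  have i2 : N + d₁ + c - d₂ = N := by omega
  have i3 : N + d₁ + c + 1 - d₁ = N + c + 1 := by omega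
  have i4 : N + d₁ + c + 1 - d₂ = N + 1 := by omega
  rw [i1, i2] at E0
  rw [i3, i4] at E1
  -- convert to ℤ
  have E0z : (τ : ℤ) + 3 * (Module.finrank ℂ (homogeneousSubmodule (Fin 3) ℂ (N + d₁ + c)) : ℤ)
      = (Module.finrank ℂ (homogeneousSubmodule (Fin 3) ℂ ((N + d₁ + c) + (d - 1))) : ℤ)
        + (Module.finrank ℂ (homogeneousSubmodule (Fin 3) ℂ (N + c)) : ℤ)
        + (Module.finrank ℂ (homogeneousSubmodule (Fin 3) ℂ N) : ℤ) := by
    exact_mod_cast congrArg (Nat.cast : ℕ → ℤ) E0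
  have E1z : (τ : ℤ) + 3 * (Module.finrank ℂ (homogeneousSubmodule (Fin 3) ℂ (N + d₁ + c + 1)) : ℤ)
      = (Module.finrank ℂ (homogeneousSubmodule (Fin 3) ℂ ((N + d₁ + c + 1) + (d - 1))) : ℤ)
        + (Module.finrank ℂ (homogeneousSubmodule (Fin 3) ℂ (N + c + 1)) : ℤ)
        + (Module.finrank ℂ (homogeneousSubmodule (Fin 3) ℂ (N + 1)) : ℤ) := by
    exact_mod_cast congrArg (Nat.cast : ℕ → ℤ) E1
  have twoHZ : ∀ n : ℕ, 2 * (Module.finrank ℂ (homogeneousSubmodule (Fin 3) ℂ n) : ℤ)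
      = ((n : ℤ) + 1) * ((n : ℤ) + 2) := by
    intro n
    exact_mod_cast congrArg (Nat.cast : ℕ → ℤ) (twoH n)
  have t1 := twoHZ (N + d₁ + c)
  have t2 := twoHZ ((N + d₁ + c) + (d - 1))
  have t3 := twoHZ (N + c)
  have t4 := twoHZ N
  have t1' := twoHZ (N + d₁ + c + 1)
  have t2' := twoHZ ((N + d₁ + c + 1) + (d - 1))
  have t3' := twoHZ (N + c + 1)
  have t4' := twoHZ (N + 1)
  push_cast at t1 t2 t3 t4 t1' t2' t3' t4'
  have Q0 : 2 * (τ : ℤ) + 3 * (((N : ℤ) + d₁ + c + 1) * ((N : ℤ) + d₁ + c + 2))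
      = ((N : ℤ) + d₁ + c + ((d - 1 : ℕ) : ℤ) + 1) * ((N : ℤ) + d₁ + c + ((d - 1 : ℕ) : ℤ) + 2)
        + ((N : ℤ) + c + 1) * ((N : ℤ) + c + 2) + ((N : ℤ) + 1) * ((N : ℤ) + 2) := by
    linear_combination 2 * E0z - 3 * t1 + t2 + t3 + t4
  have Q1 : 2 * (τ : ℤ) + 3 * (((N : ℤ) + d₁ + c + 2) * ((N : ℤ) + d₁ + c + 3))
      = ((N : ℤ) + d₁ + c + ((d - 1 : ℕ) : ℤ) + 2) * ((N : ℤ) + d₁ + c + ((d - 1 : ℕ) : ℤ) + 3)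
        + ((N : ℤ) + c + 2) * ((N : ℤ) + c + 3) + ((N : ℤ) + 2) * ((N : ℤ) + 3) := by
    linear_combination 2 * E1z - 3 * t1' + t2' + t3' + t4'
  have key : 2 * (((d - 1 : ℕ) : ℤ)) = 4 * (d₁ : ℤ) + 2 * (c : ℤ) := by
    linear_combination Q0 - Q1
  have hd : d = d₁ + d₂ + 1 := by omega
  have hee : (((d - 1 : ℕ) : ℤ)) = 2 * (d₁ : ℤ) + (c : ℤ) := by omega
  have hτ2 : 2 * (τ : ℤ) = 2 * (2 * (d₁ : ℤ) + c) ^ 2 - 2 * (d₁ : ℤ) * ((d₁ : ℤ) + c) := by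
    linear_combination Q0 + (2 * (N : ℤ) + 4 * (d₁ : ℤ) + 3 * (c : ℤ) + 3 + ((d - 1 : ℕ) : ℤ)) * hee
  have hdZ : (d : ℤ) = (d₁ : ℤ) + (d₂ : ℤ) + 1 := by exact_mod_cast congrArg (Nat.cast : ℕ → ℤ) hd
  have hcZ : (d₂ : ℤ) = (d₁ : ℤ) + (c : ℤ) := by exact_mod_cast congrArg (Nat.cast : ℕ → ℤ) hc
  have hτ4 : 2 * (τ : ℤ) = 2 * ((d : ℤ) - 1) ^ 2 - 2 * (d₁ : ℤ) * (d₂ : ℤ) := by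
    linear_combination hτ2 - 2 * ((d : ℤ) - 1 + 2 * (d₁ : ℤ) + (c : ℤ)) * hdZ
      + (2 * (d₁ : ℤ) - 2 * ((d : ℤ) - 1 + 2 * (d₁ : ℤ) + (c : ℤ))) * hcZ
  have hτZ : (τ : ℤ) = ((d : ℤ) - 1) ^ 2 - (d₁ : ℤ) * (d₂ : ℤ) := by linarith
  refine ⟨?_, ?_, hd, hτZ⟩
  · linear_combination (-1 : ℤ) * hτZ + (-(d₁ : ℤ)) * hdZ
  · linear_combination (-1 : ℤ) * hτZ + (-(d₂ : ℤ)) * hdZ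

end
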